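/- arXiv:2011.05690 — 7 statements merged into one kernel-verified Lean document; each statement's English description precedes it below -/
import Mathlib

section
/- Let A be a real n×n matrix and B a real n×m matrix. Suppose (W_k)_{k≥1} is a sequence of subspaces of ℝ^n and (C̃_k)_{k≥1} is a sequence of real n×n matrices such that: (i) W_1 equals the column span of B; (ii) for every k, the range (column space) of C̃_k is contained in W_k; and (iii) for every k, W_{k+1} is contained in the sum of W_k and the span of finitely many vectors q, each of which is an eigenvector with nonzero eigenvalue of the residual R_k = A C̃_k + C̃_k Aᵀ + B Bᵀ. Then for every k ≥ 1, W_k ⊆ 𝒦_k(A,B). (This is Proposition 2.1 of the paper, stating that the search spaces generated by the RAILS iteration with M = I and initial space orth(B) are contained in the block Krylov subspaces 𝒦_k(A,B).) -/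
open Matrix Submodule

/-- Proposition 2.1 of the paper: with `M = I` and initial search space equal to the column
span of `B`, the RAILS search spaces `W k` (expanded at each step by finitely many
eigenvectors, with nonzero eigenvalue, of the residual
`R k = A * C̃ k + C̃ k * Aᵀ + B * Bᵀ`) satisfy `W k ⊆ 𝒦_k(A, B)`,
the span of the columns of `B, A*B, …, A^(k-1)*B`. -/
theorem rails_search_space_subset_krylov
    {n m : ℕ} (A : Matrix (Fin n) (Fin n) ℝ) (B : Matrix (Fin n) (Fin m) ℝ)
    (W : ℕ → Submodule ℝ (Fin n → ℝ)) (C : ℕ → Matrix (Fin n) (Fin n) ℝ)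
    (hW1 : W 1 = Submodule.span ℝ (Set.range Bᵀ))
    (hrange : ∀ k, LinearMap.range (Matrix.mulVecLin (C k)) ≤ W k)
    (hexp : ∀ k, ∃ Q : Finset (Fin n → ℝ),
      (∀ q ∈ Q, ∃ lam : ℝ, lam ≠ 0 ∧
        (A * C k + C k * Aᵀ + B * Bᵀ).mulVec q = lam • q) ∧
      W (k + 1) ≤ W k ⊔ Submodule.span ℝ (Q : Set (Fin n → ℝ))) :
    ∀ k, 1 ≤ k →
      W k ≤ Submodule.span ℝ (⋃ i ∈ Set.Iio k, Set.range (A ^ i * B)ᵀ) := by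
  set K : ℕ → Submodule ℝ (Fin n → ℝ) :=
    fun k => Submodule.span ℝ (⋃ i ∈ Set.Iio k, Set.range (A ^ i * B)ᵀ) with hK
  have hmono : ∀ {j k : ℕ}, j ≤ k → K j ≤ K k := by
    intro j k hjk
    exact Submodule.span_mono
      (Set.biUnion_subset_biUnion_left (fun i hi => lt_of_lt_of_le hi hjk))
  have hcol : ∀ (i : ℕ) (j : Fin m) (k : ℕ), i < k → ((A ^ i * B)ᵀ j) ∈ K k := by
    intro i j k hik
    exact Submodule.subset_span (Set.mem_biUnion hik ⟨j, rfl⟩)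
  have hmulcol : ∀ (N : Matrix (Fin n) (Fin m) ℝ) (j : Fin m),
      A.mulVec (Nᵀ j) = (A * N)ᵀ j := by
    intro N j; funext i
    simp [Matrix.mulVec, Matrix.mul_apply, dotProduct]
  have hB1 : Submodule.span ℝ (Set.range Bᵀ) ≤ K 1 := by
    apply Submodule.span_le.mpr
    rintro y ⟨j, rfl⟩
    have : Bᵀ j = (A ^ 0 * B)ᵀ j := by simp
    rw [this]
    exact hcol 0 j 1 zero_lt_one
  have hA : ∀ k x, x ∈ K k → A.mulVec x ∈ K (k + 1) := by
    intro k
    have : K k ≤ (K (k + 1)).comap A.mulVecLin := by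
      apply Submodule.span_le.mpr
      intro y hy
      simp only [Set.mem_iUnion, Set.mem_Iio] at hy
      obtain ⟨i, hi, j, rfl⟩ := hy
      simp only [Submodule.mem_comap, Matrix.mulVecLin_apply, SetLike.mem_coe]
      rw [hmulcol, ← Matrix.mul_assoc, ← pow_succ']
      exact hcol (i + 1) j (k + 1) (Nat.succ_lt_succ hi)
    intro x hx
    exact this hx
  intro k hk
  induction k, hk using Nat.le_induction with
  | base =>
    rw [hW1]; exact hB1
  | succ k hk ih =>
    obtain ⟨Q, hQ, hWle⟩ := hexp k
    refine hWle.trans (sup_le (ih.trans (hmono (Nat.le_succ k))) (Submodule.span_le.mpr ?_))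
    intro q hq
    obtain ⟨lam, hlam, heig⟩ := hQ q hq
    have hq' : q = lam⁻¹ • ((A * C k + C k * Aᵀ + B * Bᵀ).mulVec q) := by
      rw [heig, smul_smul, inv_mul_cancel₀ hlam, one_smul]
    simp only [SetLike.mem_coe]
    rw [hq']
    apply Submodule.smul_mem
    rw [Matrix.add_mulVec, Matrix.add_mulVec, ← Matrix.mulVec_mulVec,
      ← Matrix.mulVec_mulVec, ← Matrix.mulVec_mulVec]
    refine add_mem (add_mem ?_ ?_) ?_
    · exact hA k _ (ih (hrange k ⟨q, rfl⟩))
    · exact hmono (Nat.le_succ k) (ih (hrange k ⟨Aᵀ.mulVec q, rfl⟩))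
    · refine hmono (Nat.one_le_iff_ne_zero.mpr (Nat.succ_ne_zero k)) (hB1 ?_)
      rw [show Set.range Bᵀ = Set.range (Matrix.col B) from rfl, ← Matrix.range_mulVecLin]
      exact ⟨Bᵀ.mulVec q, rfl⟩
end

section
/- Let A be a real n×n matrix and B a real n×m matrix whose m columns are linearly independent. Suppose (W_k)_{k≥1} is a sequence of subspaces of ℝ^n and (C̃_k)_{k≥1} is a sequence of real n×n matrices such that: (i) W_1 equals the column span of B (so dim W_1 = m); (ii) for every k, the range of C̃_k is contained in W_k; (iii) for every k, W_{k+1} is the sum of W_k and the span of m eigenvectors with nonzero eigenvalues of the residual R_k = A C̃_k + C̃_k Aᵀ + B Bᵀ; and (iv) for every k, dim W_{k+1} = dim W_k + m (i.e., the adjoined eigenvectors remain linearly independent after orthogonalization against W_k). Then for every k ≥ 1, W_k = 𝒦_k(A,B). (This is Remark 2.1 of the paper: when each expansion block Q_i has full rank, equality holds in Proposition 2.1.) -/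
open Matrix Submodule

/-- The Krylov space as used in the theorem. -/
private def K {n m : ℕ} (A : Matrix (Fin n) (Fin n) ℝ) (B : Matrix (Fin n) (Fin m) ℝ)
    (k : ℕ) : Submodule ℝ (Fin n → ℝ) :=
  Submodule.span ℝ (⋃ i ∈ Set.Iio k, Set.range (A ^ i * B)ᵀ)

private lemma K_succ {n m : ℕ} (A : Matrix (Fin n) (Fin n) ℝ) (B : Matrix (Fin n) (Fin m) ℝ)
    (k : ℕ) : K A B (k + 1) = K A B k ⊔ Submodule.span ℝ (Set.range (A ^ k * B)ᵀ) := by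
  unfold K
  rw [show (⋃ i ∈ Set.Iio (k+1), Set.range (A ^ i * B)ᵀ)
      = (⋃ i ∈ Set.Iio k, Set.range (A ^ i * B)ᵀ) ∪ Set.range (A ^ k * B)ᵀ from by
    simpa using Set.biUnion_lt_succ (fun i => Set.range (A ^ i * B)ᵀ) k]
  exact Submodule.span_union _ _

private lemma K_mono {n m : ℕ} (A : Matrix (Fin n) (Fin n) ℝ) (B : Matrix (Fin n) (Fin m) ℝ)
    (k : ℕ) : K A B k ≤ K A B (k + 1) := by
  rw [K_succ]; exact le_sup_left

private lemma col_mulVec {n m : ℕ} (A : Matrix (Fin n) (Fin n) ℝ)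
    (M : Matrix (Fin n) (Fin m) ℝ) (j : Fin m) :
    A.mulVec (Mᵀ j) = (A * M)ᵀ j := by
  funext r
  simp [Matrix.mulVec, Matrix.mul_apply, dotProduct]

private lemma map_K_le {n m : ℕ} (A : Matrix (Fin n) (Fin n) ℝ) (B : Matrix (Fin n) (Fin m) ℝ)
    (k : ℕ) {x : Fin n → ℝ} (hx : x ∈ K A B k) : A.mulVec x ∈ K A B (k + 1) := by
  have : A.mulVecLin x ∈ (K A B k).map A.mulVecLin := Submodule.mem_map_of_mem hx
  refine SetLike.le_def.mp ?_ this
  unfold K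
  rw [Submodule.map_span, Submodule.span_le]
  rintro y ⟨z, hz, rfl⟩
  simp only [Set.mem_iUnion] at hz
  obtain ⟨i, hi, j, rfl⟩ := hz
  have : A.mulVecLin ((A ^ i * B)ᵀ j) = (A ^ (i + 1) * B)ᵀ j := by
    rw [Matrix.mulVecLin_apply, col_mulVec, pow_succ', ← Matrix.mul_assoc]
  rw [this]
  exact Submodule.subset_span (Set.mem_iUnion.mpr ⟨i + 1,
    Set.mem_iUnion.mpr ⟨Nat.succ_lt_succ hi, Set.mem_range_self j⟩⟩)

private lemma mulVec_mem_span {n m : ℕ} (B : Matrix (Fin n) (Fin m) ℝ) (v : Fin m → ℝ) :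
    B.mulVec v ∈ Submodule.span ℝ (Set.range Bᵀ) := by
  show B.mulVec v ∈ Submodule.span ℝ (Set.range B.col)
  rw [← Matrix.range_mulVecLin]
  exact ⟨v, rfl⟩

/-- Remark 2.1 of the paper: if the columns of `B` are linearly independent and at every
RAILS iteration the search space `W k` is expanded by `m` eigenvectors (with nonzero
eigenvalues) of the residual `R k = A * C̃ k + C̃ k * Aᵀ + B * Bᵀ` in such a way that the
dimension increases by exactly `m`, then `W k = 𝒦_k(A, B)` for every `k ≥ 1`. -/
theorem rails_search_space_eq_krylov
    {n m : ℕ} (A : Matrix (Fin n) (Fin n) ℝ) (B : Matrix (Fin n) (Fin m) ℝ)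
    (hB : LinearIndependent ℝ Bᵀ)
    (W : ℕ → Submodule ℝ (Fin n → ℝ)) (C : ℕ → Matrix (Fin n) (Fin n) ℝ)
    (hW1 : W 1 = Submodule.span ℝ (Set.range Bᵀ))
    (hrange : ∀ k, LinearMap.range (Matrix.mulVecLin (C k)) ≤ W k)
    (hexp : ∀ k, ∃ q : Fin m → (Fin n → ℝ),
      (∀ i, ∃ lam : ℝ, lam ≠ 0 ∧
        (A * C k + C k * Aᵀ + B * Bᵀ).mulVec (q i) = lam • q i) ∧
      W (k + 1) = W k ⊔ Submodule.span ℝ (Set.range q))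
    (hdim : ∀ k, Module.finrank ℝ (W (k + 1)) = Module.finrank ℝ (W k) + m) :
    ∀ k, 1 ≤ k →
      W k = Submodule.span ℝ (⋃ i ∈ Set.Iio k, Set.range (A ^ i * B)ᵀ) := by
  have hK1 : K A B 1 = Submodule.span ℝ (Set.range Bᵀ) := by
    unfold K
    congr 1
    ext x
    simp [Set.mem_iUnion, Nat.lt_one_iff]
  suffices h : ∀ k, 1 ≤ k → W k = K A B k by exact h
  intro k hk
  induction k, hk using Nat.le_induction with
  | base => rw [hW1, hK1]
  | succ k hk ih =>
    obtain ⟨q, hq, hWsucc⟩ := hexp k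
    -- W (k+1) ≤ K (k+1)
    have hle : W (k + 1) ≤ K A B (k + 1) := by
      rw [hWsucc]
      apply sup_le
      · exact ih.le.trans (K_mono A B k)
      · rw [Submodule.span_le]
        rintro x ⟨i, rfl⟩
        obtain ⟨lam, hlam, heig⟩ := hq i
        have hqi : q i = lam⁻¹ • ((A * C k + C k * Aᵀ + B * Bᵀ).mulVec (q i)) := by
          rw [heig, smul_smul, inv_mul_cancel₀ hlam, one_smul]
        rw [hqi]
        apply Submodule.smul_mem
        rw [Matrix.add_mulVec, Matrix.add_mulVec, ← Matrix.mulVec_mulVec,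
          ← Matrix.mulVec_mulVec, ← Matrix.mulVec_mulVec]
        refine Submodule.add_mem _ (Submodule.add_mem _ ?_ ?_) ?_
        · -- A (C k q) ∈ K (k+1), since C k q ∈ W k = K k
          apply map_K_le
          rw [← ih]
          exact hrange k ⟨Aᵀ.mulVec (q i) + (q i) - Aᵀ.mulVec (q i) - (q i) + (q i), by
            simp [Matrix.mulVecLin_apply]⟩
        · -- C k (Aᵀ q) ∈ W k = K k ≤ K (k+1)
          refine K_mono A B k ?_
          rw [← ih]
          exact hrange k ⟨Aᵀ.mulVec (q i), rfl⟩
        · -- B (Bᵀ q) ∈ span range Bᵀ = K 1 ≤ K (k+1)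
          have h1 : B.mulVec (Bᵀ.mulVec (q i)) ∈ K A B 1 := by
            rw [hK1]; exact mulVec_mem_span B _
          have : K A B 1 ≤ K A B (k + 1) := by
            unfold K
            apply Submodule.span_mono
            apply Set.biUnion_subset_biUnion_left
            intro x hx
            simp only [Set.mem_Iio] at hx ⊢
            omega
          exact this h1
    -- dimension comparison
    have hdimK : Module.finrank ℝ (K A B (k + 1)) ≤ Module.finrank ℝ (K A B k) + m := by
      rw [K_succ]
      have := Submodule.finrank_sup_add_finrank_inf_eq (K A B k)
        (Submodule.span ℝ (Set.range (A ^ k * B)ᵀ))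
      have h2 : Module.finrank ℝ (Submodule.span ℝ (Set.range (A ^ k * B)ᵀ)) ≤ m := by
        simpa only [Set.finrank, Fintype.card_fin] using
          finrank_range_le_card (R := ℝ) (A ^ k * B)ᵀ
      omega
    have hWd : Module.finrank ℝ (K A B (k + 1)) ≤ Module.finrank ℝ (W (k + 1)) := by
      rw [hdim k, ih]
      exact hdimK
    exact (Submodule.eq_of_le_of_finrank_le hle hWd)
end

section
/- Let A be an invertible real n×n matrix and B a real n×m matrix. Suppose (W_k)_{k≥1} is a sequence of subspaces of ℝ^n and (C̃_k)_{k≥1} is a sequence of real n×n matrices such that: (i) W_1 equals the column span of A⁻¹B; (ii) for every k, the range of C̃_k is contained in W_k; and (iii) for every k, W_{k+1} is contained in the sum of W_k and the span of finitely many vectors q, each of which satisfies A⁻¹ R_k q = λ q for some λ ≠ 0, where R_k = A C̃_k + C̃_k Aᵀ + B Bᵀ. Then for every k ≥ 1, W_k ⊆ 𝒦_k(A⁻¹, A⁻¹B), i.e., W_k is contained in the span of the columns of A⁻¹B, A⁻²B, …, A^{-k}B. (This is Proposition 2.2 of the paper.) -/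
open Matrix Submodule

/-- Proposition 2.2 of the paper: with `M = I`, invertible `A`, initial search space equal
to the column span of `A⁻¹ * B`, and expansion at each step by finitely many eigenvectors
(with nonzero eigenvalue) of `A⁻¹ * R k`, where `R k = A * C̃ k + C̃ k * Aᵀ + B * Bᵀ` is the
residual, the RAILS search spaces satisfy `W k ⊆ 𝒦_k(A⁻¹, A⁻¹B)`, the span of the columns
of `A⁻¹B, A⁻²B, …, A^{-k}B`. -/
theorem rails_inverse_search_space_subset_krylov
    {n m : ℕ} (A : Matrix (Fin n) (Fin n) ℝ) (hA : IsUnit A.det)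
    (B : Matrix (Fin n) (Fin m) ℝ)
    (W : ℕ → Submodule ℝ (Fin n → ℝ)) (C : ℕ → Matrix (Fin n) (Fin n) ℝ)
    (hW1 : W 1 = Submodule.span ℝ (Set.range (A⁻¹ * B)ᵀ))
    (hrange : ∀ k, LinearMap.range (Matrix.mulVecLin (C k)) ≤ W k)
    (hexp : ∀ k, ∃ Q : Finset (Fin n → ℝ),
      (∀ q ∈ Q, ∃ lam : ℝ, lam ≠ 0 ∧
        (A⁻¹ * (A * C k + C k * Aᵀ + B * Bᵀ)).mulVec q = lam • q) ∧
      W (k + 1) ≤ W k ⊔ Submodule.span ℝ (Q : Set (Fin n → ℝ))) :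
    ∀ k, 1 ≤ k →
      W k ≤ Submodule.span ℝ (⋃ i ∈ Set.Iio k, Set.range (A⁻¹ ^ (i + 1) * B)ᵀ) := by
  set K : ℕ → Submodule ℝ (Fin n → ℝ) :=
    fun k => Submodule.span ℝ (⋃ i ∈ Set.Iio k, Set.range (A⁻¹ ^ (i + 1) * B)ᵀ) with hK
  have hcol : ∀ (i : ℕ) (j : Fin m) (k : ℕ), i < k → (A⁻¹ ^ (i + 1) * B)ᵀ j ∈ K k := by
    intro i j k hik
    apply Submodule.subset_span
    exact Set.mem_biUnion hik ⟨j, rfl⟩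
  have hmono : ∀ k, K k ≤ K (k + 1) := by
    intro k
    apply Submodule.span_mono
    exact Set.biUnion_subset_biUnion_left (fun i hi => lt_trans hi (Nat.lt_succ_self k))
  have hAinv : ∀ k, ∀ x ∈ K k, A⁻¹.mulVec x ∈ K (k + 1) := by
    intro k x hx
    have hle : K k ≤ Submodule.comap (A⁻¹).mulVecLin (K (k + 1)) := by
      apply Submodule.span_le.2
      rintro c hc
      simp only [Set.mem_iUnion, Set.mem_range, Set.mem_Iio] at hc
      obtain ⟨i, hi, j, rfl⟩ := hc
      rw [SetLike.mem_coe, Submodule.mem_comap, Matrix.mulVecLin_apply]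
      have hgen : ∀ (M : Matrix (Fin n) (Fin m) ℝ),
          A⁻¹.mulVec (Mᵀ j) = ((A⁻¹ * M)ᵀ) j := by
        intro M
        funext r
        simp [Matrix.mulVec, Matrix.mul_apply, Matrix.transpose_apply, dotProduct]
      have hc2 : A⁻¹.mulVec ((A⁻¹ ^ (i + 1) * B)ᵀ j) = (A⁻¹ ^ (i + 1 + 1) * B)ᵀ j := by
        rw [hgen, ← Matrix.mul_assoc, ← pow_succ']
      rw [hc2]
      exact hcol (i + 1) j (k + 1) (Nat.succ_lt_succ hi)
    exact hle hx
  have hB : ∀ k (v : Fin m → ℝ), (A⁻¹ * B).mulVec v ∈ K (k + 1) := by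
    intro k v
    have : (A⁻¹ * B).mulVec v ∈ LinearMap.range (A⁻¹ * B).mulVecLin := ⟨v, rfl⟩
    rw [Matrix.range_mulVecLin] at this
    refine Submodule.span_mono ?_ this
    intro c hc
    refine Set.mem_biUnion (show (0 : ℕ) ∈ Set.Iio (k + 1) from Nat.succ_pos k) ?_
    simp only [zero_add, pow_one]
    exact hc
  intro k hk
  induction k, hk using Nat.le_induction with
  | base =>
    rw [hW1]
    apply Submodule.span_le.2
    intro c hc
    apply Submodule.subset_span
    refine Set.mem_biUnion (show (0 : ℕ) ∈ Set.Iio 1 from Nat.zero_lt_one) ?_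
    simpa [pow_one] using hc
  | succ k hk1 ih =>
    obtain ⟨Q, hQ, hle⟩ := hexp k
    refine le_trans hle (sup_le (le_trans ih (hmono k)) ?_)
    apply Submodule.span_le.2
    intro q hq
    obtain ⟨lam, hlam, heig⟩ := hQ q hq
    have hAA : A⁻¹ * A = 1 := Matrix.nonsing_inv_mul A hA
    have hsplit : (A⁻¹ * (A * C k + C k * Aᵀ + B * Bᵀ)).mulVec q =
        (C k).mulVec q + A⁻¹.mulVec ((C k).mulVec (Aᵀ.mulVec q))
          + A⁻¹.mulVec (B.mulVec (Bᵀ.mulVec q)) := by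
      rw [Matrix.mul_add, Matrix.mul_add, ← Matrix.mul_assoc, hAA, Matrix.one_mul,
        Matrix.add_mulVec, Matrix.add_mulVec]
      rw [← Matrix.mulVec_mulVec, ← Matrix.mulVec_mulVec, ← Matrix.mulVec_mulVec,
        ← Matrix.mulVec_mulVec]
    have h1 : (C k).mulVec q ∈ K (k + 1) :=
      hmono k (ih (hrange k ⟨q, rfl⟩))
    have h2 : A⁻¹.mulVec ((C k).mulVec (Aᵀ.mulVec q)) ∈ K (k + 1) :=
      hAinv k _ (ih (hrange k ⟨Aᵀ.mulVec q, rfl⟩))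
    have h3 : A⁻¹.mulVec (B.mulVec (Bᵀ.mulVec q)) ∈ K (k + 1) := by
      rw [Matrix.mulVec_mulVec]
      exact hB k _
    have hq' : q = lam⁻¹ • ((A⁻¹ * (A * C k + C k * Aᵀ + B * Bᵀ)).mulVec q) := by
      rw [heig, smul_smul, inv_mul_cancel₀ hlam, one_smul]
    rw [hq', hsplit]
    exact Submodule.smul_mem _ _ (add_mem (add_mem h1 h2) h3)
end

section
/- Let A ∈ ℝ^{n×n}, B ∈ ℝ^{n×m}, and let V ∈ ℝ^{n×k} have orthonormal columns (Vᵀ V = I_k). Set Ã = Vᵀ A V and B̃ = Vᵀ B, and suppose T ∈ ℝ^{k×k} solves the projected Lyapunov equation Ã T + T Ãᵀ + B̃ B̃ᵀ = 0. Let R = A (V T Vᵀ) + (V T Vᵀ) Aᵀ + B Bᵀ be the residual. If q is a nonzero vector with R q = λ q and q lies in the column span of V, then λ = 0. (This is the core computation in the proof of Proposition 2.3 of the paper, showing λ q = V(Ã T + T Ãᵀ + B̃ B̃ᵀ)Vᵀ q = 0.) -/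
open Matrix

/-- The core computation in the proof of Proposition 2.3 of the paper: if `V` has
orthonormal columns, `T` solves the projected Lyapunov equation
`Ã T + T Ãᵀ + B̃ B̃ᵀ = 0` with `Ã = Vᵀ A V`, `B̃ = Vᵀ B`, and `q` is a nonzero
eigenvector of the residual `R = A V T Vᵀ + V T Vᵀ Aᵀ + B Bᵀ` that lies in the column
span of `V`, then its eigenvalue is zero. -/
theorem residual_eigenvalue_in_span_eq_zero
    {n m k : ℕ} (A : Matrix (Fin n) (Fin n) ℝ) (B : Matrix (Fin n) (Fin m) ℝ)
    (V : Matrix (Fin n) (Fin k) ℝ) (hV : Vᵀ * V = 1)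
    (T : Matrix (Fin k) (Fin k) ℝ)
    (hT : (Vᵀ * A * V) * T + T * (Vᵀ * A * V)ᵀ + (Vᵀ * B) * (Vᵀ * B)ᵀ = 0)
    (q : Fin n → ℝ) (hq : q ≠ 0) (lam : ℝ)
    (heig : (A * (V * T * Vᵀ) + (V * T * Vᵀ) * Aᵀ + B * Bᵀ).mulVec q = lam • q)
    (hspan : q ∈ Submodule.span ℝ (Set.range Vᵀ)) :
    lam = 0 := by
  obtain ⟨c, hc⟩ := (Submodule.mem_span_range_iff_exists_fun ℝ).mp hspan
  have hq' : q = V *ᵥ c := by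
    ext j
    rw [← hc]
    simp [Matrix.mulVec, dotProduct, Finset.sum_apply, mul_comm]
  set R := A * (V * T * Vᵀ) + (V * T * Vᵀ) * Aᵀ + B * Bᵀ with hR
  have key : Vᵀ * R * V = 0 := by
    have : Vᵀ * R * V
        = (Vᵀ * A * V) * T + T * (Vᵀ * A * V)ᵀ + (Vᵀ * B) * (Vᵀ * B)ᵀ := by
      simp [hR, Matrix.mul_add, Matrix.add_mul, Matrix.mul_assoc, hV,
        Matrix.transpose_mul]
      rw [← Matrix.mul_assoc Vᵀ V, hV, Matrix.one_mul]
    rw [this, hT]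
  have hc0 : c ≠ 0 := by
    intro h
    apply hq
    rw [hq', h, Matrix.mulVec_zero]
  have hcalc : lam • c = 0 := by
    have h1 : Vᵀ *ᵥ (R *ᵥ q) = lam • c := by
      rw [heig, Matrix.mulVec_smul, hq', Matrix.mulVec_mulVec, hV, Matrix.one_mulVec]
    have h2 : Vᵀ *ᵥ (R *ᵥ q) = (Vᵀ * R * V) *ᵥ c := by
      rw [hq', Matrix.mulVec_mulVec, Matrix.mulVec_mulVec]
    rw [← h1, h2, key, Matrix.zero_mulVec]
  rcases smul_eq_zero.mp hcalc with h | h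
  · exact h
  · exact absurd h hc0
end

section
/- Let A ∈ ℝ^{n×n}, B ∈ ℝ^{n×m}, and let V ∈ ℝ^{n×k} have orthonormal columns (Vᵀ V = I_k). Set Ã = Vᵀ A V and B̃ = Vᵀ B, and suppose T ∈ ℝ^{k×k} solves the projected Lyapunov equation Ã T + T Ãᵀ + B̃ B̃ᵀ = 0. Let R = A (V T Vᵀ) + (V T Vᵀ) Aᵀ + B Bᵀ. Suppose R has an eigenpair (λ, q) with q ≠ 0 and |λ| = ‖R‖₂ (the Euclidean operator norm of R). If q lies in the column span of V, then R = 0; that is, V T Vᵀ is an exact solution of the Lyapunov equation A C + C Aᵀ + B Bᵀ = 0. (This is Proposition 2.3 of the paper.) -/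
open Matrix
open scoped Matrix.Norms.L2Operator

/-- Proposition 2.3 of the paper: if `V` has orthonormal columns, `T` solves the projected
Lyapunov equation `Ã T + T Ãᵀ + B̃ B̃ᵀ = 0` with `Ã = Vᵀ A V`, `B̃ = Vᵀ B`, and the
residual `R = A V T Vᵀ + V T Vᵀ Aᵀ + B Bᵀ` has an eigenpair `(lam, q)` with `q ≠ 0`,
`|lam| = ‖R‖₂` (the Euclidean operator norm), and `q` in the column span of `V`, then
`R = 0`, i.e. `V T Vᵀ` solves the Lyapunov equation exactly. -/
theorem rails_exact_solution_of_eigenvector_in_span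
    {n m k : ℕ} (A : Matrix (Fin n) (Fin n) ℝ) (B : Matrix (Fin n) (Fin m) ℝ)
    (V : Matrix (Fin n) (Fin k) ℝ) (hV : Vᵀ * V = 1)
    (T : Matrix (Fin k) (Fin k) ℝ)
    (hT : (Vᵀ * A * V) * T + T * (Vᵀ * A * V)ᵀ + (Vᵀ * B) * (Vᵀ * B)ᵀ = 0)
    (R : Matrix (Fin n) (Fin n) ℝ)
    (hR : R = A * (V * T * Vᵀ) + (V * T * Vᵀ) * Aᵀ + B * Bᵀ)
    (q : Fin n → ℝ) (hq : q ≠ 0) (lam : ℝ)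
    (heig : R.mulVec q = lam • q)
    (hnorm : |lam| = ‖R‖)
    (hspan : q ∈ Submodule.span ℝ (Set.range Vᵀ)) :
    R = 0 := by
  -- q = V *ᵥ c for some c
  obtain ⟨c, hc⟩ := (Finsupp.mem_span_range_iff_exists_finsupp).mp hspan
  have hq' : q = V *ᵥ (fun i => c i) := by
    funext j
    rw [← hc]
    simp [Matrix.mulVec, dotProduct, Finsupp.sum_fintype, mul_comm]
  -- projected residual vanishes
  have hVl : ∀ {p : Type} (X : Matrix (Fin k) p ℝ), Vᵀ * (V * X) = X := by
    intro p X
    rw [← Matrix.mul_assoc, hV, Matrix.one_mul]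
  have hVRV : Vᵀ * R * V = 0 := by
    have e : Vᵀ * R * V
        = (Vᵀ * A * V) * T + T * (Vᵀ * A * V)ᵀ + (Vᵀ * B) * (Vᵀ * B)ᵀ := by
      rw [hR]
      simp only [Matrix.add_mul, Matrix.mul_add, Matrix.transpose_mul,
        Matrix.transpose_transpose, Matrix.mul_assoc, hVl, hV, Matrix.mul_one]
    rw [e, hT]
  -- qᵀ R q = 0
  have h0 : q ⬝ᵥ (R *ᵥ q) = 0 := by
    rw [hq', Matrix.mulVec_mulVec, Matrix.dotProduct_mulVec, Matrix.vecMul_mulVec]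
    have : Vᵀ * (R * V) = 0 := by rw [← Matrix.mul_assoc]; exact hVRV
    rw [this]
    simp
  have hlam : lam = 0 := by
    have h1 : lam * (q ⬝ᵥ q) = 0 := by
      calc lam * (q ⬝ᵥ q) = q ⬝ᵥ (lam • q) := by
            simp [dotProduct_smul, mul_comm]
        _ = q ⬝ᵥ (R *ᵥ q) := by rw [heig]
        _ = 0 := h0
    have hqq : q ⬝ᵥ q ≠ 0 := by
      intro h
      exact hq ((dotProduct_self_eq_zero).mp h)
    exact (mul_eq_zero.mp h1).resolve_right hqq
  have : ‖R‖ = 0 := by rw [← hnorm, hlam, abs_zero]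
  exact norm_eq_zero.mp this
end

section
/- Let A ∈ ℝ^{n×n}, B ∈ ℝ^{n×m}, let W be a subspace of ℝ^n, and let C̃ ∈ ℝ^{n×n} be a matrix whose range (column space) is contained in W. Let R = A C̃ + C̃ Aᵀ + B Bᵀ. If q ∈ ℝ^n satisfies R q = λ q for some λ ≠ 0, then q lies in the subspace A·W + W + Range(B), where A·W denotes the image of W under A and Range(B) the column span of B. (This is the key single-iteration step in the proof of Proposition 2.1 of the paper: an eigenvector of the residual, orthogonalized against the current search space, is only nonzero in the direction of A V_k and B.) -/
open Matrix

/-- The key single-iteration step in the proof of Proposition 2.1 of the paper: if the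
range of `C̃` is contained in a subspace `W` and `q` is an eigenvector with nonzero
eigenvalue of the residual `R = A C̃ + C̃ Aᵀ + B Bᵀ`, then
`q ∈ A·W + W + Range(B)`. -/
theorem residual_eigenvector_mem
    {n m : ℕ} (A : Matrix (Fin n) (Fin n) ℝ) (B : Matrix (Fin n) (Fin m) ℝ)
    (W : Submodule ℝ (Fin n → ℝ)) (C : Matrix (Fin n) (Fin n) ℝ)
    (hrange : LinearMap.range (Matrix.mulVecLin C) ≤ W)
    (q : Fin n → ℝ) (lam : ℝ) (hlam : lam ≠ 0)
    (heig : (A * C + C * Aᵀ + B * Bᵀ).mulVec q = lam • q) :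
    q ∈ Submodule.map (Matrix.mulVecLin A) W ⊔ W ⊔
      LinearMap.range (Matrix.mulVecLin B) := by
  have hq : q = lam⁻¹ • ((A * C + C * Aᵀ + B * Bᵀ).mulVec q) := by
    rw [heig, smul_smul, inv_mul_cancel₀ hlam, one_smul]
  rw [hq]
  apply Submodule.smul_mem
  have hexp : (A * C + C * Aᵀ + B * Bᵀ).mulVec q =
      A.mulVec (C.mulVec q) + C.mulVec (Aᵀ.mulVec q) + B.mulVec (Bᵀ.mulVec q) := by
    simp [Matrix.add_mulVec, Matrix.mulVec_mulVec]
  rw [hexp]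
  refine add_mem (add_mem ?_ ?_) ?_
  · apply Submodule.mem_sup_left
    apply Submodule.mem_sup_left
    exact ⟨C.mulVec q, hrange ⟨q, rfl⟩, rfl⟩
  · exact Submodule.mem_sup_left (Submodule.mem_sup_right (hrange ⟨Aᵀ.mulVec q, rfl⟩))
  · exact Submodule.mem_sup_right ⟨Bᵀ.mulVec q, rfl⟩
end

section
/- Let A ∈ ℝ^{n×n} be invertible, let B ∈ ℝ^{n×m}, let W be a subspace of ℝ^n, and let C̃ ∈ ℝ^{n×n} be a matrix whose range is contained in W. Let R = A C̃ + C̃ Aᵀ + B Bᵀ. If q ∈ ℝ^n satisfies A⁻¹ R q = λ q for some λ ≠ 0, then q lies in the subspace W + A⁻¹·W + Range(A⁻¹B), where A⁻¹·W denotes the image of W under A⁻¹ and Range(A⁻¹B) the column span of A⁻¹B. (This is the key single-iteration step in the proof of Proposition 2.2 of the paper.) -/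
open Matrix

/-- The key single-iteration step in the proof of Proposition 2.2 of the paper: if `A` is
invertible, the range of `C̃` is contained in a subspace `W`, and `q` satisfies
`A⁻¹ R q = lam q` with `lam ≠ 0`, where `R = A C̃ + C̃ Aᵀ + B Bᵀ` is the residual, then
`q ∈ W + A⁻¹·W + Range(A⁻¹B)`. -/
theorem inverse_residual_eigenvector_mem
    {n m : ℕ} (A : Matrix (Fin n) (Fin n) ℝ) (hA : IsUnit A.det)
    (B : Matrix (Fin n) (Fin m) ℝ)
    (W : Submodule ℝ (Fin n → ℝ)) (C : Matrix (Fin n) (Fin n) ℝ)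
    (hrange : LinearMap.range (Matrix.mulVecLin C) ≤ W)
    (q : Fin n → ℝ) (lam : ℝ) (hlam : lam ≠ 0)
    (heig : (A⁻¹ * (A * C + C * Aᵀ + B * Bᵀ)).mulVec q = lam • q) :
    q ∈ W ⊔ Submodule.map (Matrix.mulVecLin A⁻¹) W ⊔
      LinearMap.range (Matrix.mulVecLin (A⁻¹ * B)) := by
  have hexp : A⁻¹ * (A * C + C * Aᵀ + B * Bᵀ)
      = C + A⁻¹ * (C * Aᵀ) + (A⁻¹ * B) * Bᵀ := by
    rw [mul_add, mul_add, ← Matrix.mul_assoc, ← Matrix.mul_assoc, nonsing_inv_mul A hA,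
      one_mul, Matrix.mul_assoc A⁻¹ B Bᵀ, ← Matrix.mul_assoc A⁻¹ B Bᵀ]
  rw [hexp, add_mulVec, add_mulVec, ← mulVec_mulVec, ← mulVec_mulVec] at heig
  have hq : q = lam⁻¹ • (C.mulVec q + A⁻¹.mulVec (C.mulVec (Aᵀ.mulVec q))
      + (A⁻¹ * B).mulVec (Bᵀ.mulVec q)) := by
    rw [mulVec_mulVec q (A⁻¹ * B) Bᵀ, heig, smul_smul, inv_mul_cancel₀ hlam, one_smul]
  rw [hq]
  refine Submodule.smul_mem _ _ (add_mem (add_mem ?_ ?_) ?_)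
  · exact Submodule.mem_sup_left (Submodule.mem_sup_left (hrange ⟨q, rfl⟩))
  · exact Submodule.mem_sup_left (Submodule.mem_sup_right
      ⟨C.mulVec (Aᵀ.mulVec q), hrange ⟨Aᵀ.mulVec q, rfl⟩, rfl⟩)
  · exact Submodule.mem_sup_right ⟨Bᵀ.mulVec q, rfl⟩
end
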